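/- arXiv:2411.14562 — 3 statements merged into one kernel-verified Lean document; each statement's English description precedes it below -/
import Mathlib

section
/- Let k ≥ 2 and let e_1, …, e_n be integers with 2 ≤ e_i ≤ k for all i and ∑_{i=1}^n (e_i − 1) = 2(k − 1). Then there exist cyclic permutations σ_1, …, σ_n in the symmetric group on {1, …, k} such that (i) σ_i is a cycle of length e_i for each i, (ii) σ_1 σ_2 ⋯ σ_n is the identity, (iii) the subgroup generated by σ_1, …, σ_n acts transitively on {1, …, k}, and (iv) for each i ∈ {1, …, n−1}, the supports of σ_i and σ_{i+1} intersect. -/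
open List
namespace Stmt0Aux

private lemma zipWith_tail_split {α β : Type*} (f : α → α → β) :
    ∀ (l : List α) (x : α) (r : List α),
      List.zipWith f (l ++ x :: r) (l ++ x :: r).tail
        = List.zipWith f (l ++ [x]) (l ++ [x]).tail ++ List.zipWith f (x :: r) r
  | [], x, r => by simp
  | [a], x, r => by simp
  | a :: b :: l, x, r => by
      have ih := zipWith_tail_split f (b :: l) x r
      simp only [List.cons_append, List.tail_cons, List.zipWith, List.append_eq] at ih ⊢
      rw [ih]

private lemma formPerm_split {α : Type*} [DecidableEq α] (l : List α) (x : α) (r : List α) :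
    (l ++ x :: r).formPerm = (l ++ [x]).formPerm * (x :: r).formPerm := by
  unfold List.formPerm
  rw [zipWith_tail_split, List.prod_append, List.tail_cons]

private lemma step_formPerm {α : Type*} [DecidableEq α] (B : List α) (x : α) (R V : List α)
    (h : (B ++ x :: (R ++ V)).Nodup) :
    (B ++ x :: R).formPerm * (x :: (V ++ R.reverse)).formPerm = (B ++ x :: V).formPerm := by
  have hxRV : (x :: (R ++ V)).Nodup := h.of_append_right
  have hperm : (x :: (V ++ R.reverse)) ~ (x :: (R ++ V)) := by
    refine List.Perm.cons x ?_
    calc V ++ R.reverse ~ V ++ R := List.Perm.append_left V R.reverse_perm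
    _ ~ R ++ V := List.perm_append_comm
  have hnd : (x :: (V ++ R.reverse)).Nodup := hperm.nodup_iff.mpr hxRV
  have hrot : (x :: (V ++ R.reverse)).formPerm = (R.reverse ++ x :: V).formPerm := by
    have : (x :: (V ++ R.reverse)) = ((x :: V) ++ R.reverse) := by simp
    rw [this, ← List.formPerm_rotate ((x :: V) ++ R.reverse) (by simpa using hnd) (x :: V).length,
      List.rotate_eq_drop_append_take (by simp), List.drop_left, List.take_left]
  rw [hrot, formPerm_split R.reverse x V, formPerm_split B x R, formPerm_split B x V]
  have hrev : (R.reverse ++ [x]) = (x :: R).reverse := by simp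
  rw [hrev, List.formPerm_reverse, mul_assoc, ← mul_assoc (x :: R).formPerm, mul_inv_cancel,
    one_mul]


def SS (s : ℕ → ℕ) (j : ℕ) : ℕ := ∑ i ∈ Finset.range j, s i
def AA (K : ℕ) (s : ℕ → ℕ) (j : ℕ) : ℕ := min (SS s j) K
def TT (K : ℕ) (s : ℕ → ℕ) (j : ℕ) : ℕ := SS s j - K
def uu (K : ℕ) (s : ℕ → ℕ) (j : ℕ) : ℕ := AA K s (j+1) - AA K s j
def tt (K : ℕ) (s : ℕ → ℕ) (j : ℕ) : ℕ := TT K s (j+1) - TT K s j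
def zz (K : ℕ) (s : ℕ → ℕ) : ℕ → List ℕ
  | 0 => [0]
  | j+1 => List.range' (AA K s j + 1) (uu K s j) ++ (zz K s j).drop (tt K s j)
def xx (K : ℕ) (s : ℕ → ℕ) (j : ℕ) : ℕ := ((zz K s j).drop (tt K s j)).headI
def ww (K : ℕ) (s : ℕ → ℕ) (j : ℕ) : List ℕ :=
  xx K s j :: ((List.range' (AA K s j + 1) (uu K s j)).reverse ++ (zz K s j).take (tt K s j))

variable {K n : ℕ} {s : ℕ → ℕ}

section
variable (hs1 : ∀ j < n, 1 ≤ s j) (hs2 : ∀ j < n, s j ≤ K) (hsum : SS s n = 2 * K)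
include hs1 hs2 hsum

lemma SS_le {j : ℕ} (hj : j ≤ n) : SS s j ≤ 2 * K := by
  rw [← hsum]
  exact Finset.sum_le_sum_of_subset (Finset.range_subset_range.2 hj)

omit hs1 hs2 hsum in
lemma SS_succ (j : ℕ) : SS s (j+1) = SS s j + s j := Finset.sum_range_succ _ _

omit hs1 hs2 hsum in
lemma AT (j : ℕ) : AA K s j + TT K s j = SS s j := by
  unfold AA TT; omega

/-- main invariant -/
lemma inv : ∀ j ≤ n, (zz K s j).Nodup ∧ (∀ m ∈ zz K s j, m ≤ AA K s j) ∧
    (zz K s j).length + TT K s j = 1 + AA K s j := by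
  intro j
  induction j with
  | zero =>
    intro _
    refine ⟨by simp [zz], by simp [zz], ?_⟩
    simp [zz, AA, TT, SS]
  | succ j ih =>
    intro hj
    obtain ⟨hnd, hbd, hlen⟩ := ih (by omega)
    have hSsucc : SS s (j+1) = SS s j + s j := SS_succ j
    have hle1 : SS s j ≤ 2 * K := SS_le hs1 hs2 hsum (by omega)
    have hle2 : SS s (j+1) ≤ 2 * K := SS_le hs1 hs2 hsum hj
    have hs1' := hs1 j (by omega)
    have hs2' := hs2 j (by omega)
    have hTA : TT K s (j+1) ≤ AA K s j := by unfold TT AA; omega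
    have htlen : tt K s j < (zz K s j).length := by
      have := AT (K := K) (s := s) j
      unfold tt at *; unfold TT AA at *; omega
    constructor
    · rw [zz]
      refine List.Nodup.append List.nodup_range' (hnd.sublist (List.drop_sublist _ _)) ?_
      intro a ha hb
      have := hbd a ((List.drop_sublist _ _).mem hb)
      rw [List.mem_range'] at ha
      omega
    constructor
    · intro m hm
      rw [zz, List.mem_append] at hm
      rcases hm with hm | hm
      · rw [List.mem_range'] at hm
        unfold uu at hm
        unfold AA at *
        omega
      · have := hbd m ((List.drop_sublist _ _).mem hm)
        unfold AA at *
        omega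
    · rw [zz, List.length_append, List.length_drop, List.length_range']
      unfold uu tt at *
      unfold AA TT at *
      omega

/-- the basic arithmetic facts at a step -/
lemma facts {j : ℕ} (hj : j < n) :
    uu K s j + tt K s j = s j ∧ TT K s (j+1) ≤ AA K s j ∧ AA K s (j+1) ≤ K ∧
      AA K s j + uu K s j = AA K s (j+1) ∧ TT K s j + tt K s j = TT K s (j+1) := by
  have hSsucc : SS s (j+1) = SS s j + s j := SS_succ j
  have hle1 : SS s j ≤ 2 * K := SS_le hs1 hs2 hsum (by omega)
  have hle2 : SS s (j+1) ≤ 2 * K := SS_le hs1 hs2 hsum (by omega)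
  have hs1' := hs1 j hj
  have hs2' := hs2 j hj
  unfold uu tt TT AA
  omega

lemma tt_lt {j : ℕ} (hj : j < n) : tt K s j < (zz K s j).length := by
  obtain ⟨-, -, hlen⟩ := inv hs1 hs2 hsum j (by omega)
  have h2 := (facts hs1 hs2 hsum hj).2.1
  have h5 := (facts hs1 hs2 hsum hj).2.2.2.2
  omega

/-- drop decomposition -/
lemma drop_eq {j : ℕ} (hj : j < n) :
    (zz K s j).drop (tt K s j) = xx K s j :: ((zz K s j).drop (tt K s j)).tail := by
  have h := tt_lt hs1 hs2 hsum hj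
  have hne : (zz K s j).drop (tt K s j) ≠ [] := by
    rw [← List.length_pos_iff_ne_nil, List.length_drop]; omega
  obtain ⟨c, cs, hc⟩ := List.exists_cons_of_ne_nil hne
  rw [hc]; simp [xx, hc]

lemma zz_rev_eq {j : ℕ} (hj : j < n) :
    (zz K s j).reverse = ((zz K s j).drop (tt K s j)).tail.reverse ++
      xx K s j :: ((zz K s j).take (tt K s j)).reverse := by
  conv_lhs => rw [← List.take_append_drop (tt K s j) (zz K s j)]
  rw [List.reverse_append]
  rw [drop_eq hs1 hs2 hsum hj]
  simp

lemma zz_succ_rev_eq {j : ℕ} (hj : j < n) :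
    (zz K s (j+1)).reverse = ((zz K s j).drop (tt K s j)).tail.reverse ++
      xx K s j :: (List.range' (AA K s j + 1) (uu K s j)).reverse := by
  rw [zz, List.reverse_append]
  rw [drop_eq hs1 hs2 hsum hj]
  simp

lemma ww_len {j : ℕ} (hj : j < n) : (ww K s j).length = 1 + s j := by
  have h := tt_lt hs1 hs2 hsum hj
  have h1 := (facts hs1 hs2 hsum hj).1
  rw [ww, List.length_cons, List.length_append, List.length_reverse, List.length_range',
    List.length_take]
  omega

lemma xx_mem {j : ℕ} (hj : j < n) : xx K s j ∈ zz K s j := by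
  have := drop_eq hs1 hs2 hsum hj
  exact (List.drop_sublist _ _).mem (this ▸ List.mem_cons_self)

/-- nodup of the combined list -/
lemma big_nodup {j : ℕ} (hj : j < n) :
    ((zz K s j).reverse ++ (List.range' (AA K s j + 1) (uu K s j)).reverse).Nodup := by
  obtain ⟨hnd, hbd, -⟩ := inv hs1 hs2 hsum j (by omega)
  refine List.Nodup.append (by simpa using hnd) (by simp [List.nodup_range' _ _]) ?_
  intro a ha hb
  rw [List.mem_reverse] at ha hb
  have := hbd a ha
  rw [List.mem_range'] at hb
  omega

lemma ww_nodup {j : ℕ} (hj : j < n) : (ww K s j).Nodup := by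
  have hbig := big_nodup hs1 hs2 hsum hj
  have hzr : (zz K s j ++ (List.range' (AA K s j + 1) (uu K s j)).reverse).Nodup :=
    ((List.reverse_perm _).append_right _).nodup_iff.mp hbig
  have hsub : ((zz K s j).take (tt K s j) ++
      xx K s j :: (List.range' (AA K s j + 1) (uu K s j)).reverse) <+
      zz K s j ++ (List.range' (AA K s j + 1) (uu K s j)).reverse := by
    conv_rhs => rw [← List.take_append_drop (tt K s j) (zz K s j), List.append_assoc]
    refine List.Sublist.append_left ?_ _
    rw [drop_eq hs1 hs2 hsum hj]
    exact List.Sublist.cons₂ _ (List.sublist_append_right _ _)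
  have hnd2 := hzr.sublist hsub
  have hperm : ww K s j ~ (zz K s j).take (tt K s j) ++
      xx K s j :: (List.range' (AA K s j + 1) (uu K s j)).reverse := by
    refine List.Perm.trans ?_ List.perm_middle.symm
    exact List.Perm.cons _ List.perm_append_comm
  exact hperm.nodup_iff.mpr hnd2


lemma zz_bound {j : ℕ} (hj : j ≤ n) : ∀ m ∈ zz K s j, m ≤ K := by
  intro m hm
  have := (inv hs1 hs2 hsum j hj).2.1 m hm
  unfold AA at this; omega

lemma ww_bound {j : ℕ} (hj : j < n) : ∀ m ∈ ww K s j, m ≤ K := by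
  intro m hm
  rw [ww, List.mem_cons, List.mem_append, List.mem_reverse, List.mem_range'] at hm
  have hA : AA K s (j+1) ≤ K := (facts hs1 hs2 hsum hj).2.2.1
  have hu := (facts hs1 hs2 hsum hj).2.2.2.1
  rcases hm with rfl | hm | hm
  · exact zz_bound hs1 hs2 hsum (le_of_lt hj) _ (xx_mem hs1 hs2 hsum hj)
  · omega
  · exact zz_bound hs1 hs2 hsum (le_of_lt hj) _ ((List.take_sublist _ _).mem hm)

lemma step_mul {α : Type*} [DecidableEq α] (f : ℕ → α)
    (hf : ∀ a ≤ K, ∀ b ≤ K, f a = f b → a = b) {j : ℕ} (hj : j < n) :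
    ((zz K s j).reverse.map f).formPerm * ((ww K s j).map f).formPerm
      = ((zz K s (j+1)).reverse.map f).formPerm := by
  have e1 : (zz K s j).reverse.map f
      = (((zz K s j).drop (tt K s j)).tail.reverse).map f ++ f (xx K s j) ::
        ((((zz K s j).take (tt K s j)).reverse).map f) := by
    rw [zz_rev_eq hs1 hs2 hsum hj]; simp
  have e2 : (ww K s j).map f
      = f (xx K s j) :: ((((List.range' (AA K s j + 1) (uu K s j)).reverse).map f) ++
        ((((zz K s j).take (tt K s j)).reverse).map f).reverse) := by
    rw [ww]; simp
  have e3 : (zz K s (j+1)).reverse.map f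
      = (((zz K s j).drop (tt K s j)).tail.reverse).map f ++ f (xx K s j) ::
        (((List.range' (AA K s j + 1) (uu K s j)).reverse).map f) := by
    rw [zz_succ_rev_eq hs1 hs2 hsum hj]; simp
  rw [e1, e2, e3]
  refine step_formPerm _ _ _ _ ?_
  have heq : (((zz K s j).drop (tt K s j)).tail.reverse).map f ++ f (xx K s j) ::
      (((((zz K s j).take (tt K s j)).reverse).map f) ++
        (((List.range' (AA K s j + 1) (uu K s j)).reverse).map f))
      = ((zz K s j).reverse ++ (List.range' (AA K s j + 1) (uu K s j)).reverse).map f := by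
    rw [List.map_append, e1]; simp
  rw [heq]
  refine List.Nodup.map_on ?_ (big_nodup hs1 hs2 hsum hj)
  intro a ha b hb hab
  have hA : AA K s (j+1) ≤ K := (facts hs1 hs2 hsum hj).2.2.1
  have hu := (facts hs1 hs2 hsum hj).2.2.2.1
  have hbound : ∀ c ∈ (zz K s j).reverse ++ (List.range' (AA K s j + 1) (uu K s j)).reverse,
      c ≤ K := by
    intro c hc
    rw [List.mem_append, List.mem_reverse, List.mem_reverse, List.mem_range'] at hc
    rcases hc with hc | hc
    · exact zz_bound hs1 hs2 hsum (le_of_lt hj) _ hc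
    · omega
  exact hf a (hbound a ha) b (hbound b hb) hab

lemma head_mem_ww_self {j : ℕ} (hj : j < n) : (zz K s j).headI ∈ ww K s j := by
  have hlt := tt_lt hs1 hs2 hsum hj
  rcases Nat.eq_zero_or_pos (tt K s j) with h | h
  · have : xx K s j = (zz K s j).headI := by rw [xx, h, List.drop_zero]
    rw [ww, ← this]; exact List.mem_cons_self
  · have hne : zz K s j ≠ [] := by
      rw [← List.length_pos_iff_ne_nil]; omega
    obtain ⟨c, cs, hc⟩ := List.exists_cons_of_ne_nil hne
    have hmem : (zz K s j).headI ∈ (zz K s j).take (tt K s j) := by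
      rw [hc]
      obtain ⟨t', ht'⟩ := Nat.exists_eq_add_of_lt h
      rw [show tt K s j = t' + 1 by omega]
      simp
    rw [ww]
    exact List.mem_cons_of_mem _ (List.mem_append_right _ hmem)

lemma head_succ_mem_ww {j : ℕ} (hj : j < n) : (zz K s (j+1)).headI ∈ ww K s j := by
  rcases Nat.eq_zero_or_pos (uu K s j) with h | h
  · have : zz K s (j+1) = (zz K s j).drop (tt K s j) := by rw [zz, h]; simp
    rw [this, ← xx, ww]
    exact List.mem_cons_self
  · have hhead : (zz K s (j+1)).headI = AA K s j + 1 := by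
      rw [zz]
      obtain ⟨u', hu'⟩ := Nat.exists_eq_add_of_lt h
      rw [show uu K s j = u' + 1 by omega]
      rw [List.range'_succ]
      simp
    rw [hhead, ww]
    refine List.mem_cons_of_mem _ (List.mem_append_left _ ?_)
    rw [List.mem_reverse, List.mem_range'_1]
    omega

lemma mem_ww_of_new {j : ℕ} (hj : j < n) {m : ℕ} (h1 : AA K s j < m)
    (h2 : m ≤ AA K s (j+1)) : m ∈ ww K s j := by
  have hu := (facts hs1 hs2 hsum hj).2.2.2.1
  rw [ww]
  refine List.mem_cons_of_mem _ (List.mem_append_left _ ?_)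
  rw [List.mem_reverse, List.mem_range'_1]
  omega

omit hs1 hs2 hsum in
lemma AA_zero : AA K s 0 = 0 := by simp [AA, SS]

lemma AA_n : AA K s n = K := by unfold AA; omega

lemma zz_n_len : (zz K s n).length = 1 := by
  have := (inv hs1 hs2 hsum n le_rfl).2.2
  have h1 : AA K s n = K := AA_n hs1 hs2 hsum
  have h2 : TT K s n = K := by unfold TT; omega
  omega
end
end Stmt0Aux

/-- Existence of cycles `σ₁, …, σₙ` in `Sym(k)` of prescribed lengths
`e₁, …, eₙ` (with `2 ≤ eᵢ ≤ k` and `∑ (eᵢ - 1) = 2(k-1)`), whose product is the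
identity, generating a transitive subgroup, and with consecutive supports
intersecting. -/
theorem stmt0 (k n : ℕ) (hk : 2 ≤ k) (e : Fin n → ℕ)
    (he : ∀ i, 2 ≤ e i ∧ e i ≤ k)
    (hsum : ∑ i, (e i - 1) = 2 * (k - 1)) :
    ∃ σ : Fin n → Equiv.Perm (Fin k),
      (∀ i, (σ i).IsCycle ∧ (σ i).support.card = e i) ∧
      (List.ofFn σ).prod = 1 ∧
      (∀ a b : Fin k, ∃ g ∈ Subgroup.closure (Set.range σ), g a = b) ∧
      (∀ (i : ℕ) (h : i + 1 < n),
        ((σ ⟨i, by omega⟩).support ∩ (σ ⟨i + 1, h⟩).support).Nonempty) := by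
  classical
  set K := k - 1 with hKdef
  have hK : 1 ≤ K := by omega
  set s : ℕ → ℕ := fun j => if h : j < n then e ⟨j, h⟩ - 1 else 0 with hs_def
  have hs1 : ∀ j < n, 1 ≤ s j := by
    intro j hj
    have := (he ⟨j, hj⟩).1
    simp only [hs_def, dif_pos hj]
    omega
  have hs2 : ∀ j < n, s j ≤ K := by
    intro j hj
    have := (he ⟨j, hj⟩).2
    simp only [hs_def, dif_pos hj]
    omega
  have hsum' : Stmt0Aux.SS s n = 2 * K := by
    unfold Stmt0Aux.SS
    rw [← Fin.sum_univ_eq_sum_range]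
    rw [← hsum]
    refine Finset.sum_congr rfl fun i _ => ?_
    simp [hs_def, dif_pos i.isLt]
  set emb : ℕ → Fin k := fun m => ⟨min m K, by omega⟩ with hemb
  have hembinj : ∀ a ≤ K, ∀ b ≤ K, emb a = emb b → a = b := by
    intro a ha b hb h
    have := congrArg Fin.val h
    simp only [hemb] at this
    omega
  set σ : Fin n → Equiv.Perm (Fin k) := fun i => ((Stmt0Aux.ww K s i).map emb).formPerm with hσ
  -- basic facts about each σ i as a function of j < n
  have hww_nodup : ∀ (j : ℕ), j < n → ((Stmt0Aux.ww K s j).map emb).Nodup := by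
    intro j hj
    exact List.Nodup.map_on
      (fun a ha b hb => hembinj a (Stmt0Aux.ww_bound hs1 hs2 hsum' hj a ha) b
        (Stmt0Aux.ww_bound hs1 hs2 hsum' hj b hb))
      (Stmt0Aux.ww_nodup hs1 hs2 hsum' hj)
  have hww_len : ∀ (j : ℕ) (hj : j < n), ((Stmt0Aux.ww K s j).map emb).length = e ⟨j, hj⟩ := by
    intro j hj
    rw [List.length_map, Stmt0Aux.ww_len hs1 hs2 hsum' hj]
    have := (he ⟨j, hj⟩).1
    simp only [hs_def, dif_pos hj]
    omega
  have hsupp : ∀ (j : ℕ) (hj : j < n),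
      (σ ⟨j, hj⟩).support = ((Stmt0Aux.ww K s j).map emb).toFinset := by
    intro j hj
    refine List.support_formPerm_of_nodup _ (hww_nodup j hj) ?_
    intro x hx
    have := congrArg List.length hx
    rw [hww_len j hj] at this
    have := (he ⟨j, hj⟩).1
    simp only [List.length_singleton] at *; omega
  have hcycle : ∀ (j : ℕ) (hj : j < n), (σ ⟨j, hj⟩).IsCycle := by
    intro j hj
    refine List.isCycle_formPerm (hww_nodup j hj) ?_
    rw [hww_len j hj]
    exact (he ⟨j, hj⟩).1
  refine ⟨σ, ?_, ?_, ?_, ?_⟩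
  · -- cycles with prescribed support cards
    intro i
    refine ⟨hcycle i.1 i.2, ?_⟩
    rw [show i = ⟨i.1, i.2⟩ from rfl, hsupp i.1 i.2,
      List.toFinset_card_of_nodup (hww_nodup i.1 i.2), hww_len i.1 i.2]
  · -- product is one
    have key : ∀ j ≤ n, ((List.ofFn σ).take j).prod
        = ((Stmt0Aux.zz K s j).reverse.map emb).formPerm := by
      intro j
      induction j with
      | zero => intro _; simp [Stmt0Aux.zz]
      | succ j ih =>
        intro hj
        have hjn : j < n := by omega
        have hlen : j < (List.ofFn σ).length := by simpa using hjn
        rw [List.prod_take_succ _ _ hlen, ih (by omega)]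
        have hget : (List.ofFn σ)[j] = σ ⟨j, hjn⟩ := by
          simp
        rw [hget, hσ]
        exact Stmt0Aux.step_mul hs1 hs2 hsum' emb hembinj hjn
    have h1 : (List.ofFn σ).prod = ((Stmt0Aux.zz K s n).reverse.map emb).formPerm := by
      have := key n le_rfl
      rwa [List.take_of_length_le (by simp)] at this
    obtain ⟨a, ha⟩ := List.length_eq_one_iff.mp (Stmt0Aux.zz_n_len hs1 hs2 hsum')
    rw [h1, ha]
    simp
  · -- transitivity
    have hmemcl : ∀ (j : ℕ) (hj : j < n), σ ⟨j, hj⟩ ∈ Subgroup.closure (Set.range σ) :=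
      fun j hj => Subgroup.subset_closure (Set.mem_range_self _)
    have reach : ∀ j ≤ n, ∀ m ≤ Stmt0Aux.AA K s j,
        ∃ g ∈ Subgroup.closure (Set.range σ), g (emb m) = emb 0 := by
      intro j
      induction j with
      | zero =>
        intro _ m hm
        rw [Stmt0Aux.AA_zero, Nat.le_zero] at hm
        subst hm
        exact ⟨1, Subgroup.one_mem _, rfl⟩
      | succ j ih =>
        intro hj m hm
        have hjn : j < n := by omega
        by_cases hmj : m ≤ Stmt0Aux.AA K s j
        · exact ih (by omega) m hmj
        · push_neg at hmj
          have hmemw : m ∈ Stmt0Aux.ww K s j := Stmt0Aux.mem_ww_of_new hs1 hs2 hsum' hjn hmj hm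
          have hxmemw : Stmt0Aux.xx K s j ∈ Stmt0Aux.ww K s j := by
            rw [Stmt0Aux.ww]; exact List.mem_cons_self
          have hms : emb m ∈ (σ ⟨j, hjn⟩).support := by
            rw [hsupp j hjn, List.mem_toFinset]
            exact List.mem_map_of_mem (f := emb) hmemw
          have hxs : emb (Stmt0Aux.xx K s j) ∈ (σ ⟨j, hjn⟩).support := by
            rw [hsupp j hjn, List.mem_toFinset]
            exact List.mem_map_of_mem (f := emb) hxmemw
          obtain ⟨z, hz⟩ := (hcycle j hjn).sameCycle
            (Equiv.Perm.mem_support.mp hms) (Equiv.Perm.mem_support.mp hxs)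
          have hxle : Stmt0Aux.xx K s j ≤ Stmt0Aux.AA K s j :=
            (Stmt0Aux.inv hs1 hs2 hsum' j (by omega)).2.1 _ (Stmt0Aux.xx_mem hs1 hs2 hsum' hjn)
          obtain ⟨g, hg, hg0⟩ := ih (by omega) _ hxle
          refine ⟨g * (σ ⟨j, hjn⟩) ^ z, Subgroup.mul_mem _ hg (Subgroup.zpow_mem _ (hmemcl j hjn) z), ?_⟩
          simp only [Equiv.Perm.mul_apply]
          rw [hz, hg0]
    have embval : ∀ a : Fin k, emb a.val = a := by
      intro a
      have := a.isLt
      simp only [hemb]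
      exact Fin.ext (by simp; omega)
    have reach' : ∀ a : Fin k, ∃ g ∈ Subgroup.closure (Set.range σ), g a = emb 0 := by
      intro a
      have hle : a.val ≤ Stmt0Aux.AA K s n := by
        rw [Stmt0Aux.AA_n hs1 hs2 hsum']
        have := a.isLt; omega
      obtain ⟨g, hg, hga⟩ := reach n le_rfl a.val hle
      rw [embval] at hga
      exact ⟨g, hg, hga⟩
    intro a b
    obtain ⟨ga, hga, hga0⟩ := reach' a
    obtain ⟨gb, hgb, hgb0⟩ := reach' b
    refine ⟨gb⁻¹ * ga, Subgroup.mul_mem _ (Subgroup.inv_mem _ hgb) hga, ?_⟩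
    simp only [Equiv.Perm.mul_apply, hga0]
    rw [← hgb0]
    simp
  · -- consecutive supports intersect
    intro i h
    have hi : i < n := by omega
    refine ⟨emb ((Stmt0Aux.zz K s (i + 1)).headI), ?_⟩
    rw [Finset.mem_inter, hsupp i hi, hsupp (i+1) h, List.mem_toFinset, List.mem_toFinset]
    exact ⟨List.mem_map_of_mem (f := emb) (Stmt0Aux.head_succ_mem_ww hs1 hs2 hsum' hi),
      List.mem_map_of_mem (f := emb) (Stmt0Aux.head_mem_ww_self hs1 hs2 hsum' h)⟩
end

section
/- Let p > δ ≥ 0 and k ≥ 2 be integers, set g = p − δ and α = ⌊g/(2(k−1))⌋, and assume δ ≥ α(g − (k−1)(α+1)). Then there exist nonnegative integers α_1, …, α_p such that ∑_{j=1}^p j·α_j = p, ∑_{j=1}^p α_j = g, and α_j ≤ 2(k−1) for every j. -/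
private lemma gauss_icc (q : ℕ) : 2 * ∑ j ∈ Finset.Icc 1 q, j = q * (q + 1) := by
  induction q with
  | zero => simp
  | succ n ih =>
    rw [Finset.sum_Icc_succ_top (by omega)]
    nlinarith [ih]

private lemma base_sum (p q c M : ℕ) (h : q + 1 ≤ p) :
    ∑ j ∈ Finset.Icc 1 p, (if j ≤ q then M else if j = q + 1 then c else 0)
      = M * q + c := by
  have h1 : ∑ j ∈ Finset.Icc 1 (q + 1), (if j ≤ q then M else if j = q + 1 then c else 0)
      = ∑ j ∈ Finset.Icc 1 p, (if j ≤ q then M else if j = q + 1 then c else 0) := by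
    refine Finset.sum_subset (Finset.Icc_subset_Icc_right h) ?_
    intro x hx hnx
    simp only [Finset.mem_Icc] at hx hnx
    rw [if_neg (by omega), if_neg (by omega)]
  rw [← h1, Finset.sum_Icc_succ_top (by omega), if_neg (by omega), if_pos rfl]
  have h2 : ∀ j ∈ Finset.Icc 1 q, (if j ≤ q then M else if j = q + 1 then c else 0) = M := by
    intro j hj
    simp only [Finset.mem_Icc] at hj
    rw [if_pos hj.2]
  rw [Finset.sum_congr rfl h2, Finset.sum_const, Nat.card_Icc]
  simp [mul_comm]

private lemma base_wsum (p q c M : ℕ) (h : q + 1 ≤ p) :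
    ∑ j ∈ Finset.Icc 1 p, j * (if j ≤ q then M else if j = q + 1 then c else 0)
      = M * (∑ j ∈ Finset.Icc 1 q, j) + c * (q + 1) := by
  have h1 : ∑ j ∈ Finset.Icc 1 (q + 1), j * (if j ≤ q then M else if j = q + 1 then c else 0)
      = ∑ j ∈ Finset.Icc 1 p, j * (if j ≤ q then M else if j = q + 1 then c else 0) := by
    refine Finset.sum_subset (Finset.Icc_subset_Icc_right h) ?_
    intro x hx hnx
    simp only [Finset.mem_Icc] at hx hnx
    rw [if_neg (by omega), if_neg (by omega), mul_zero]
  rw [← h1, Finset.sum_Icc_succ_top (by omega), if_neg (by omega), if_pos rfl]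
  have h2 : ∀ j ∈ Finset.Icc 1 q, j * (if j ≤ q then M else if j = q + 1 then c else 0)
      = j * M := by
    intro j hj
    simp only [Finset.mem_Icc] at hj
    rw [if_pos hj.2]
  rw [Finset.sum_congr rfl h2, ← Finset.sum_mul]
  ring

/-- Under the Severi variety nonemptiness criterion, there exist
nonnegative integers `α₁, …, α_p` with `∑ j αⱼ = p`, `∑ αⱼ = g` and each
`αⱼ ≤ 2(k-1)`. -/
theorem stmt11 (p δ k : ℕ) (hδ : δ < p) (hk : 2 ≤ k)
    (g α : ℕ) (hg : g = p - δ) (hα : α = g / (2 * (k - 1)))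
    (hcond : (δ : ℤ) ≥ (α : ℤ) * ((g : ℤ) - ((k : ℤ) - 1) * (α + 1))) :
    ∃ a : ℕ → ℕ,
      (∑ j ∈ Finset.Icc 1 p, j * a j) = p ∧
      (∑ j ∈ Finset.Icc 1 p, a j) = g ∧
      (∀ j, a j ≤ 2 * (k - 1)) := by
  have hg1 : 1 ≤ g := by omega
  have hm2 : 2 ≤ 2 * (k - 1) := by omega
  obtain ⟨q, hqdef⟩ : ∃ q, q = (g - 1) / (2 * (k - 1)) := ⟨_, rfl⟩
  obtain ⟨c, hcdef⟩ : ∃ c, c = (g - 1) % (2 * (k - 1)) := ⟨_, rfl⟩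
  have hqc : 2 * (k - 1) * q + c = g - 1 := by
    rw [hqdef, hcdef]; exact Nat.div_add_mod _ _
  have hclt : c < 2 * (k - 1) := by rw [hcdef]; exact Nat.mod_lt _ (by omega)
  obtain ⟨r, hrdef⟩ : ∃ r, r = g % (2 * (k - 1)) := ⟨_, rfl⟩
  have hrα : 2 * (k - 1) * α + r = g := by
    rw [hα, hrdef]; exact Nat.div_add_mod _ _
  have hrlt : r < 2 * (k - 1) := by rw [hrdef]; exact Nat.mod_lt _ (by omega)
  have hpZ : (p : ℤ) = g + δ := by exact_mod_cast (by omega : p = g + δ)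
  obtain ⟨W, hWdef⟩ : ∃ W, W = 2 * (k - 1) * (∑ j ∈ Finset.Icc 1 q, j) + c * (q + 1) := ⟨_, rfl⟩
  have key : W + q + 1 ≤ p := by
    rw [hWdef]
    have hS : 2 * (k - 1) * (∑ j ∈ Finset.Icc 1 q, j) = (k - 1) * (q * (q + 1)) := by
      rw [show 2 * (k - 1) * (∑ j ∈ Finset.Icc 1 q, j)
          = (k - 1) * (2 * ∑ j ∈ Finset.Icc 1 q, j) by ring, gauss_icc]
    rw [hS]
    rcases Nat.eq_zero_or_pos r with h0 | h1
    · -- r = 0 : g = 2(k-1)α, q = α - 1, c = 2(k-1) - 1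
      rw [h0, add_zero] at hrα
      obtain ⟨β, rfl⟩ : ∃ β, α = β + 1 := by
        cases α with
        | zero => rw [Nat.mul_zero] at hrα; exact absurd hrα (by omega)
        | succ β => exact ⟨β, rfl⟩
      rw [mul_add, mul_one] at hrα
      have hsplit : g - 1 = (2 * (k - 1) - 1) + 2 * (k - 1) * β := by
        generalize hP : 2 * (k - 1) * β = P at hrα ⊢
        omega
      have hq : q = β := by
        rw [hqdef, hsplit, Nat.add_mul_div_left _ _ (show 0 < 2 * (k - 1) by omega),
          Nat.div_eq_of_lt (by omega), Nat.zero_add]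
      have hc : c = 2 * (k - 1) - 1 := by
        rw [hcdef, hsplit, Nat.add_mul_mod_self_left, Nat.mod_eq_of_lt (by omega)]
      rw [hq, hc]
      zify [show 1 ≤ k from by omega, show 1 ≤ 2 * (k - 1) from by omega]
      have hgZ : 2 * ((k : ℤ) - 1) * β + 2 * ((k : ℤ) - 1) = g := by
        zify [show 1 ≤ k from by omega] at hrα
        linarith [hrα]
      push_cast at hcond
      have hEq : ((k : ℤ) - 1) * (β * (β + 1)) + (2 * ((k : ℤ) - 1) - 1) * (β + 1) + β + 1
          = (g : ℤ) + ((β : ℤ) + 1) * ((g : ℤ) - ((k : ℤ) - 1) * (((β : ℤ) + 1) + 1)) := by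
        linear_combination ((β : ℤ) + 2) * hgZ
      linarith [hcond, hpZ, hEq]
    · -- r ≥ 1 : q = α, c = r - 1
      have hsplit : g - 1 = (r - 1) + 2 * (k - 1) * α := by
        generalize hP : 2 * (k - 1) * α = P at hrα ⊢
        omega
      have hq : q = α := by
        rw [hqdef, hsplit, Nat.add_mul_div_left _ _ (show 0 < 2 * (k - 1) by omega),
          Nat.div_eq_of_lt (by omega), Nat.zero_add]
      have hc : c = r - 1 := by
        rw [hcdef, hsplit, Nat.add_mul_mod_self_left, Nat.mod_eq_of_lt (by omega)]
      rw [hq, hc]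
      zify [show 1 ≤ k from by omega, show 1 ≤ r from h1]
      have hgZ : 2 * ((k : ℤ) - 1) * α + r = g := by
        zify [show 1 ≤ k from by omega] at hrα
        linarith [hrα]
      have hEq : ((k : ℤ) - 1) * (α * (α + 1)) + ((r : ℤ) - 1) * (α + 1) + α + 1
          = (g : ℤ) + (α : ℤ) * ((g : ℤ) - ((k : ℤ) - 1) * ((α : ℤ) + 1)) := by
        linear_combination ((α : ℤ) + 1) * hgZ
      linarith [hcond, hpZ, hEq]
  obtain ⟨N, hNdef⟩ : ∃ N, N = p - W := ⟨_, rfl⟩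
  have hNge : q + 1 ≤ N := by omega
  -- opaque
  have hNle : N ≤ p := by omega
  have hq1p : q + 1 ≤ p := by omega
  refine ⟨fun j => (if j ≤ q then 2 * (k - 1) else if j = q + 1 then c else 0)
      + (if j = N then 1 else 0), ?_, ?_, ?_⟩
  · -- weighted sum
    have hsplit : ∀ j ∈ Finset.Icc 1 p,
        j * ((if j ≤ q then 2 * (k - 1) else if j = q + 1 then c else 0)
          + (if j = N then 1 else 0))
        = j * (if j ≤ q then 2 * (k - 1) else if j = q + 1 then c else 0)
          + (if j = N then j else 0) := by
      intro j _
      rw [mul_add]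
      congr 1
      split_ifs with h
      · rw [mul_one]
      · rw [mul_zero]
    rw [Finset.sum_congr rfl hsplit, Finset.sum_add_distrib,
      base_wsum p q c (2 * (k - 1)) hq1p, Finset.sum_ite_eq',
      if_pos (Finset.mem_Icc.mpr ⟨by omega, hNle⟩), ← hWdef]
    omega
  · -- sum
    have hsplit : ∀ j ∈ Finset.Icc 1 p,
        ((if j ≤ q then 2 * (k - 1) else if j = q + 1 then c else 0)
          + (if j = N then 1 else 0))
        = (if j ≤ q then 2 * (k - 1) else if j = q + 1 then c else 0)
          + (if j = N then 1 else 0) := fun j _ => rfl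
    rw [Finset.sum_add_distrib, base_sum p q c (2 * (k - 1)) hq1p, Finset.sum_ite_eq',
      if_pos (Finset.mem_Icc.mpr ⟨by omega, hNle⟩)]
    generalize hP : 2 * (k - 1) * q = P at hqc ⊢
    omega
  · -- bound
    intro j
    dsimp only
    split_ifs <;> omega
end

section
/- Let G be a finite group acting transitively on a set X with at least 2 elements, and let σ_1, …, σ_n be generators of G with σ_1 ⋯ σ_n = id. If every σ_i is a transposition (a cycle of length 2), then n is even and n ≥ 2(|X| − 1). -/
open Equiv Equiv.Perm Subgroup MulAction

namespace Stmt15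


variable {X : Type*}

/-- Number of equivalence classes of a setoid. -/
noncomputable def ns (r : Setoid X) : ℕ := Nat.card (Quotient r)

lemma ns_le_of_le [Finite X] {r s : Setoid X} (h : r ≤ s) : ns s ≤ ns r := by
  refine Nat.card_le_card_of_surjective
    (fun q => Quotient.liftOn q (fun x => Quotient.mk s x)
      (fun a b hab => Quotient.sound (h hab))) (fun q => ?_)
  obtain ⟨x, rfl⟩ := Quotient.exists_rep q
  exact ⟨Quotient.mk r x, rfl⟩

lemma ns_eq_card [Finite X] {r : Setoid X} (h : ∀ x y, r x y ↔ x = y) :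
    ns r = Nat.card X := by
  refine (Nat.card_congr (Equiv.ofBijective (fun x => Quotient.mk r x) ⟨?_, ?_⟩)).symm
  · intro a b hab
    exact (h a b).mp (Quotient.exact hab)
  · intro q; obtain ⟨x, rfl⟩ := Quotient.exists_rep q; exact ⟨x, rfl⟩



variable {X : Type*}

def pj (r : Setoid X) (a b : X) : Setoid X where
  r x y := r x y ∨ (r x a ∧ r b y) ∨ (r x b ∧ r a y)
  iseqv := by
    constructor
    · intro x; exact Or.inl (r.refl x)
    · rintro x y (h | ⟨h1, h2⟩ | ⟨h1, h2⟩)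
      · exact Or.inl (r.symm h)
      · exact Or.inr (Or.inr ⟨r.symm h2, r.symm h1⟩)
      · exact Or.inr (Or.inl ⟨r.symm h2, r.symm h1⟩)
    · rintro x y z (h | ⟨h1, h2⟩ | ⟨h1, h2⟩) (h' | ⟨h1', h2'⟩ | ⟨h1', h2'⟩)
      · exact Or.inl (r.trans h h')
      · exact Or.inr (Or.inl ⟨r.trans h h1', h2'⟩)
      · exact Or.inr (Or.inr ⟨r.trans h h1', h2'⟩)
      · exact Or.inr (Or.inl ⟨h1, r.trans h2 h'⟩)
      · exact Or.inl (r.trans h1 (r.trans (r.symm h1') (r.trans (r.symm h2) h2')))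
      · exact Or.inl (r.trans h1 h2')
      · exact Or.inr (Or.inr ⟨h1, r.trans h2 h'⟩)
      · exact Or.inl (r.trans h1 h2')
      · exact Or.inl (r.trans h1 (r.trans (r.symm h1') (r.trans (r.symm h2) h2')))

lemma le_pj (r : Setoid X) (a b : X) : r ≤ pj r a b := fun _ _ h => Or.inl h

lemma ns_le_succ [Finite X] {r s : Setoid X} (hrs : r ≤ s) (b : X)
    (h : ∀ x y, s x y → ¬ r x b → ¬ r y b → r x y) : ns r ≤ ns s + 1 := by
  classical
  have hfin : Fintype (Quotient s) := Fintype.ofFinite _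
  have hwd : ∀ x y, r x y →
      (if r x b then (none : Option (Quotient s)) else some (Quotient.mk s x)) =
      (if r y b then (none : Option (Quotient s)) else some (Quotient.mk s y)) := by
    intro x y hxy
    by_cases hxb : r x b
    · have hyb : r y b := r.trans (r.symm hxy) hxb
      rw [if_pos hxb, if_pos hyb]
    · have hyb : ¬ r y b := fun hyb => hxb (r.trans hxy hyb)
      rw [if_neg hxb, if_neg hyb]
      exact congrArg some (Quotient.sound (hrs hxy))
  have key : ns r ≤ Nat.card (Option (Quotient s)) := by
    refine Nat.card_le_card_of_injective
      (fun q => Quotient.liftOn q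
        (fun x => if r x b then (none : Option (Quotient s)) else some (Quotient.mk s x))
        hwd) ?_
    intro q q'
    obtain ⟨x, rfl⟩ := Quotient.exists_rep q
    obtain ⟨y, rfl⟩ := Quotient.exists_rep q'
    show (if r x b then (none : Option (Quotient s)) else some (Quotient.mk s x)) =
        (if r y b then (none : Option (Quotient s)) else some (Quotient.mk s y)) → _
    by_cases hxb : r x b <;> by_cases hyb : r y b <;>
      simp only [if_pos, if_neg, hxb, hyb, if_true, if_false]
    · intro _; exact Quotient.sound (r.trans hxb (r.symm hyb))
    · intro hc; exact absurd hc (by simp)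
    · intro hc; exact absurd hc (by simp)
    · intro hc
      have hxy : s x y := Quotient.exact (Option.some_injective _ hc)
      exact Quotient.sound (h x y hxy hxb hyb)
  calc ns r ≤ Nat.card (Option (Quotient s)) := key
    _ = ns s + 1 := Finite.card_option

lemma ns_lt [Finite X] {r s : Setoid X} (hrs : r ≤ s) {a b : X}
    (hs : s a b) (hr : ¬ r a b) : ns s < ns r := by
  classical
  have : Fintype (Quotient r) := Fintype.ofFinite _
  have : Fintype (Quotient s) := Fintype.ofFinite _
  have key := Fintype.card_lt_of_surjective_not_injective
    (fun q : Quotient r => Quotient.liftOn q (fun x => Quotient.mk s x)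
      (fun x y hxy => Quotient.sound (hrs hxy)))
    (by
      intro q; obtain ⟨x, rfl⟩ := Quotient.exists_rep q
      exact ⟨Quotient.mk r x, rfl⟩)
    (by
      intro hinj
      have h1 : Quotient.liftOn (Quotient.mk r a) (fun x => Quotient.mk s x)
          (fun x y hxy => Quotient.sound (hrs hxy)) = Quotient.mk s a := rfl
      have : Quotient.mk r a = Quotient.mk r b := hinj (by
        show Quotient.mk s a = Quotient.mk s b
        exact Quotient.sound hs)
      exact hr (Quotient.exact this))
  simpa only [ns, Nat.card_eq_fintype_card] using key



variable {X : Type*} [Fintype X] [DecidableEq X]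

/-- The same-cycle setoid of a permutation. -/
def scs (π : Perm X) : Setoid X :=
  ⟨π.SameCycle, ⟨fun x => SameCycle.refl π x, fun h => h.symm, fun h h' => h.trans h'⟩⟩

lemma step {π : Perm X} (s : Setoid X) (h : ∀ x, s (π x) x) :
    ∀ {x y}, π.SameCycle x y → s x y := by
  have key : ∀ (i : ℕ) (x : X), s ((π ^ i) x) x := by
    intro i
    induction i with
    | zero => intro x; simpa using s.refl x
    | succ i ih =>
      intro x
      have hx : (π ^ (i + 1)) x = π ((π ^ i) x) := by
        rw [pow_succ']; rfl
      rw [hx]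
      exact s.trans (h _) (ih x)
  intro x y hxy
  obtain ⟨i, _, hi⟩ := hxy.exists_pow_eq'
  exact s.symm (hi ▸ key i x)

lemma factB {π : Perm X} {a b : X} (hab : a ≠ b)
    (h : ¬ π.SameCycle a b) : (swap a b * π).SameCycle a b := by
  classical
  have hER : ∃ k, 0 < k ∧ (π ^ k) a = a :=
    ⟨orderOf π, orderOf_pos π, by rw [pow_orderOf_eq_one]; rfl⟩
  set p := Nat.find hER with hp
  have hp0 : 0 < p := (Nat.find_spec hER).1
  have hpa : (π ^ p) a = a := (Nat.find_spec hER).2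
  have key : ∀ j, j < p → ((swap a b * π) ^ j) a = (π ^ j) a := by
    intro j
    induction j with
    | zero => intro _; rfl
    | succ j ih =>
      intro hj
      have hj' : j < p := lt_trans (Nat.lt_succ_self j) hj
      have h1 : ((swap a b * π) ^ (j + 1)) a = (swap a b * π) (((swap a b * π) ^ j) a) := by
        rw [pow_succ']; rfl
      have h2 : (π ^ (j + 1)) a = π ((π ^ j) a) := by rw [pow_succ']; rfl
      rw [h1, ih hj', Perm.mul_apply, ← h2]
      have hne1 : (π ^ (j + 1)) a ≠ a := by
        intro heq
        exact Nat.find_min hER hj ⟨Nat.succ_pos j, heq⟩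
      have hne2 : (π ^ (j + 1)) a ≠ b := by
        intro heq
        apply h
        refine ⟨((j + 1 : ℕ) : ℤ), ?_⟩
        rw [zpow_natCast]
        exact heq
      exact swap_apply_of_ne_of_ne hne1 hne2
  have hfin : ((swap a b * π) ^ p) a = b := by
    obtain ⟨q, hq⟩ : ∃ q, p = q + 1 := ⟨p - 1, (Nat.succ_pred_eq_of_pos hp0).symm⟩
    have h1 : ((swap a b * π) ^ (q + 1)) a = (swap a b * π) (((swap a b * π) ^ q) a) := by
      rw [pow_succ']; rfl
    have h2 : (π ^ (q + 1)) a = π ((π ^ q) a) := by rw [pow_succ']; rfl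
    rw [hq, h1, key q (hq ▸ Nat.lt_succ_self q), Perm.mul_apply, ← h2, ← hq, hpa,
      swap_apply_left]
  exact ⟨(p : ℤ), by rw [zpow_natCast]; exact hfin⟩

lemma scs_le_scs_swap_mul {π : Perm X} {a b : X} (hab : a ≠ b)
    (h : ¬ π.SameCycle a b) : scs π ≤ scs (swap a b * π) := by
  intro x y hxy
  refine step (scs (swap a b * π)) (fun x => ?_) hxy
  show (swap a b * π).SameCycle (π x) x
  have hρx : (swap a b * π).SameCycle ((swap a b * π) x) x :=
    sameCycle_apply_left.mpr (SameCycle.refl _ x)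
  have hx : (swap a b * π) x = swap a b (π x) := rfl
  by_cases h1 : π x = a
  · have hb : (swap a b * π) x = b := by rw [hx, h1, swap_apply_left]
    rw [h1]
    exact (factB hab h).trans (by simpa only [hb] using hρx)
  · by_cases h2 : π x = b
    · have ha : (swap a b * π) x = a := by rw [hx, h2, swap_apply_right]
      rw [h2]
      exact (factB hab h).symm.trans (by simpa only [ha] using hρx)
    · have hfix : (swap a b * π) x = π x := by rw [hx, swap_apply_of_ne_of_ne h1 h2]
      simpa only [hfix] using hρx

lemma factA {π : Perm X} {a b : X} (hab : a ≠ b) :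
    ns (scs (swap a b * π)) ≤ ns (scs π) + 1 := by
  set ρ := swap a b * π with hρdef
  have hπ : π = swap a b * ρ := by rw [hρdef, ← mul_assoc, swap_mul_self, one_mul]
  have hstep : ∀ x, (pj (scs ρ) a b) (π x) x := by
    intro x
    have hx : π x = swap a b (ρ x) := by rw [hπ]; rfl
    have hρx : ρ.SameCycle (ρ x) x := sameCycle_apply_left.mpr (SameCycle.refl _ x)
    by_cases h1 : ρ x = a
    · have hb : π x = b := by rw [hx, h1, swap_apply_left]
      rw [hb]
      exact Or.inr (Or.inr ⟨SameCycle.refl ρ b, h1 ▸ hρx⟩)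
    · by_cases h2 : ρ x = b
      · have ha : π x = a := by rw [hx, h2, swap_apply_right]
        rw [ha]
        exact Or.inr (Or.inl ⟨SameCycle.refl ρ a, h2 ▸ hρx⟩)
      · have hfix : π x = ρ x := by rw [hx, swap_apply_of_ne_of_ne h1 h2]
        exact Or.inl (hfix ▸ hρx)
  have hle : scs π ≤ pj (scs ρ) a b := fun x y hxy => step _ hstep hxy
  have h1 : ns (pj (scs ρ) a b) ≤ ns (scs π) := ns_le_of_le hle
  have h2 : ns (scs ρ) ≤ ns (pj (scs ρ) a b) + 1 := by
    refine ns_le_succ (le_pj _ a b) b ?_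
    rintro x y (hh | ⟨ha1, hb1⟩ | ⟨hb1, ha1⟩) hxb hyb
    · exact hh
    · exact absurd hb1.symm hyb
    · exact absurd hb1 hxb
  omega

/-- The orbit setoid of a subgroup of the permutation group. -/
def orbS (G : Subgroup (Perm X)) : Setoid X := orbitRel G X

lemma orbS_rel {G : Subgroup (Perm X)} {x y : X} :
    orbS G x y ↔ ∃ g ∈ G, g y = x := by
  constructor
  · intro hxy
    obtain ⟨⟨g, hg⟩, hgx⟩ := mem_orbit_iff.mp hxy
    exact ⟨g, hg, hgx⟩
  · rintro ⟨g, hg, hgx⟩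
    exact mem_orbit_iff.mpr ⟨⟨g, hg⟩, hgx⟩

lemma orbS_mono {G G' : Subgroup (Perm X)} (h : G ≤ G') : orbS G ≤ orbS G' := by
  intro x y hxy
  obtain ⟨g, hg, hgx⟩ := orbS_rel.mp hxy
  exact orbS_rel.mpr ⟨g, h hg, hgx⟩

lemma closure_apply_rel (s : Setoid X) {S : Set (Perm X)}
    (hgen : ∀ g ∈ S, ∀ x, s (g x) x) :
    ∀ g ∈ closure S, ∀ x, s (g x) x := by
  intro g hg
  refine closure_induction (p := fun g _ => ∀ x, s (g x) x) hgen
    (fun x => by simpa using s.refl x) ?_ ?_ hg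
  · intro g h _ _ hgx hhx x
    have : (g * h) x = g (h x) := rfl
    rw [this]
    exact s.trans (hgx (h x)) (hhx x)
  · intro g _ hgx x
    have := hgx (g⁻¹ x)
    rw [← Perm.mul_apply, mul_inv_cancel, Perm.one_apply] at this
    exact s.symm this

lemma orb_closure_le {S : Set (Perm X)} (s : Setoid X)
    (hgen : ∀ g ∈ S, ∀ x, s (g x) x) : orbS (closure S) ≤ s := by
  intro x y hxy
  obtain ⟨g, hg, hgx⟩ := orbS_rel.mp hxy
  exact hgx ▸ closure_apply_rel s hgen g hg y

lemma scs_le_orbS {G : Subgroup (Perm X)} {π : Perm X} (hπ : π ∈ G) :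
    scs π ≤ orbS G := by
  intro x y hxy
  obtain ⟨k, hk⟩ := hxy
  refine orbS_rel.mpr ⟨(π ^ k)⁻¹, inv_mem (zpow_mem hπ k), ?_⟩
  rw [← hk, ← Perm.mul_apply, inv_mul_cancel, Perm.one_apply]

lemma scs_one (x y : X) : (scs (1 : Perm X)) x y ↔ x = y := by
  constructor
  · rintro ⟨k, hk⟩
    rw [one_zpow] at hk
    exact hk
  · rintro rfl
    exact SameCycle.refl _ x

lemma orbS_bot (x y : X) : (orbS (⊥ : Subgroup (Perm X))) x y ↔ x = y := by
  rw [orbS_rel]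
  constructor
  · rintro ⟨g, hg, hgx⟩
    rw [mem_bot] at hg
    subst hg
    exact hgx.symm
  · rintro rfl
    exact ⟨1, one_mem _, rfl⟩


lemma key (L : List (Perm X)) (hL : ∀ τ ∈ L, τ.IsSwap) :
    Fintype.card X + ns (scs L.prod) ≤
      L.length + 2 * ns (orbS (closure {τ : Perm X | τ ∈ L})) := by
  classical
  induction L with
  | nil =>
    have h1 : ns (scs ((List.nil : List (Perm X)).prod)) = Nat.card X := by
      rw [List.prod_nil]; exact ns_eq_card scs_one
    have h2 : ns (orbS (closure {τ : Perm X | τ ∈ (List.nil : List (Perm X))})) = Nat.card X := by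
      have hset : {τ : Perm X | τ ∈ (List.nil : List (Perm X))} = (∅ : Set (Perm X)) := by
        ext τ; simp
      rw [hset, Subgroup.closure_empty]
      exact ns_eq_card orbS_bot
    rw [h1, h2, Nat.card_eq_fintype_card]
    omega
  | cons τ L ih =>
    obtain ⟨a, b, hab, rfl⟩ := hL τ List.mem_cons_self
    have hL' : ∀ τ ∈ L, τ.IsSwap := fun τ hτ => hL τ (List.mem_cons_of_mem _ hτ)
    have hset : {x : Perm X | x ∈ swap a b :: L} = insert (swap a b) {x : Perm X | x ∈ L} := by
      ext x; simp [List.mem_cons]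
    have hprod : (swap a b :: L).prod = swap a b * L.prod := List.prod_cons
    rw [hset, hprod]
    set S := {x : Perm X | x ∈ L} with hS
    set π := L.prod with hπ
    set G := closure S with hG
    have hGle : G ≤ closure (insert (swap a b) S) := closure_mono (Set.subset_insert _ _)
    have hπG : π ∈ G := list_prod_mem (fun x hx => subset_closure hx)
    have hIH := ih hL'
    by_cases hcase : (orbS G) a b
    · have h1 : ns (scs (swap a b * π)) ≤ ns (scs π) + 1 := factA hab
      have h2 : orbS (closure (insert (swap a b) S)) ≤ orbS G := by
        refine orb_closure_le _ ?_
        intro g hg x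
        rcases Set.mem_insert_iff.mp hg with rfl | hgS
        · by_cases hxa : x = a
          · rw [hxa, swap_apply_left]; exact (orbS G).symm hcase
          · by_cases hxb : x = b
            · rw [hxb, swap_apply_right]; exact hcase
            · rw [swap_apply_of_ne_of_ne hxa hxb]
        · exact orbS_rel.mpr ⟨g, subset_closure hgS, rfl⟩
      have h3 : ns (orbS G) ≤ ns (orbS (closure (insert (swap a b) S))) := ns_le_of_le h2
      simp only [List.length_cons]
      omega
    · have hsc : ¬ π.SameCycle a b := fun hsc => hcase (scs_le_orbS hπG hsc)
      have h1 : ns (scs (swap a b * π)) < ns (scs π) :=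
        ns_lt (scs_le_scs_swap_mul hab hsc) (factB hab hsc) hsc
      have h2 : orbS (closure (insert (swap a b) S)) ≤ pj (orbS G) a b := by
        refine orb_closure_le _ ?_
        intro g hg x
        rcases Set.mem_insert_iff.mp hg with rfl | hgS
        · by_cases hxa : x = a
          · rw [hxa, swap_apply_left]
            exact Or.inr (Or.inr ⟨(orbS G).refl b, (orbS G).refl a⟩)
          · by_cases hxb : x = b
            · rw [hxb, swap_apply_right]
              exact Or.inr (Or.inl ⟨(orbS G).refl a, (orbS G).refl b⟩)
            · rw [swap_apply_of_ne_of_ne hxa hxb]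
        · exact Or.inl (orbS_rel.mpr ⟨g, subset_closure hgS, rfl⟩)
      have h3 : orbS G ≤ orbS (closure (insert (swap a b) S)) := orbS_mono hGle
      have h4 : ns (orbS G) ≤ ns (orbS (closure (insert (swap a b) S))) + 1 := by
        refine ns_le_succ h3 b ?_
        intro x y hxy hxb hyb
        rcases h2 hxy with hh | ⟨ha1, hb1⟩ | ⟨hb1, ha1⟩
        · exact hh
        · exact absurd ((orbS G).symm hb1) hyb
        · exact absurd hb1 hxb
      simp only [List.length_cons]
      omega

end Stmt15

/-- If transpositions `σ₁, …, σₙ` on a finite set `X` with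
`|X| ≥ 2` have product the identity and generate a subgroup acting transitively
on `X`, then `n` is even and `n ≥ 2(|X| - 1)`. -/
theorem stmt15 {X : Type*} [Fintype X] [DecidableEq X]
    (hX : 2 ≤ Fintype.card X)
    (n : ℕ) (σ : Fin n → Equiv.Perm X)
    (hswap : ∀ i, (σ i).IsSwap)
    (hprod : (List.ofFn σ).prod = 1)
    (htrans : ∀ a b : X, ∃ g ∈ Subgroup.closure (Set.range σ), g a = b) :
    Even n ∧ 2 * (Fintype.card X - 1) ≤ n := by
  have hswapL : ∀ τ ∈ List.ofFn σ, τ.IsSwap := by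
    intro τ hτ
    obtain ⟨i, rfl⟩ := List.mem_ofFn.mp hτ
    exact hswap i
  constructor
  · have hsign := Equiv.Perm.sign_prod_list_swap hswapL
    rw [hprod, map_one, List.length_ofFn] at hsign
    exact (neg_one_pow_eq_one_iff_even (by decide : (-1 : ℤˣ) ≠ 1)).mp hsign.symm
  · have hkey := Stmt15.key (List.ofFn σ) hswapL
    rw [hprod] at hkey
    have h1 : Stmt15.ns (Stmt15.scs (1 : Equiv.Perm X)) = Nat.card X :=
      Stmt15.ns_eq_card Stmt15.scs_one
    have hset : {τ : Equiv.Perm X | τ ∈ List.ofFn σ} = Set.range σ := by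
      ext τ; simp [List.mem_ofFn]
    rw [hset] at hkey
    have h2 : Stmt15.ns (Stmt15.orbS (Subgroup.closure (Set.range σ))) = 1 := by
      rw [Stmt15.ns, Nat.card_eq_one_iff_unique]
      constructor
      · constructor
        intro q q'
        obtain ⟨x, rfl⟩ := Quotient.exists_rep q
        obtain ⟨y, rfl⟩ := Quotient.exists_rep q'
        refine Quotient.sound ?_
        obtain ⟨g, hg, hgyx⟩ := htrans y x
        exact Stmt15.orbS_rel.mpr ⟨g, hg, hgyx⟩
      · have : Nonempty X := Fintype.card_pos_iff.mp (by omega)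
        obtain ⟨x⟩ := this
        exact ⟨Quotient.mk _ x⟩
    rw [h1, h2, List.length_ofFn, Nat.card_eq_fintype_card] at hkey
    omega
end
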